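/- Factorization lower bound for the nuclear norm: for any real matrices C ∈ ℝ^{M×P} and B ∈ ℝ^{N×P}, the matrix A = C Bᵀ satisfies ‖A‖_* ≤ (1/2)(‖B‖_F² + ‖C‖_F²). -/

import Mathlib

open Matrix

/-- Squared Frobenius norm of a real matrix: `∑_{i,j} M_{ij}²`. -/
def frobSq {m n : ℕ} (X : Matrix (Fin m) (Fin n) ℝ) : ℝ :=
  ∑ i, ∑ j, (X i j) ^ 2

/-- Nuclear norm of a real matrix: the trace of the positive semidefinite
square root of `AᴴA = AᵀA` (i.e., the sum of singular values of `A`). -/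
noncomputable def nuclearNorm {m n : ℕ} (A : Matrix (Fin m) (Fin n) ℝ) : ℝ :=
  ((Matrix.posSemidef_conjTranspose_mul_self A).1.eigenvectorUnitary.1 *
    diagonal ((RCLike.ofReal : ℝ → ℝ) ∘ (√·) ∘ (Matrix.posSemidef_conjTranspose_mul_self A).1.eigenvalues) *
    (star (Matrix.posSemidef_conjTranspose_mul_self A).1.eigenvectorUnitary : Matrix (Fin n) (Fin n) ℝ)).trace

noncomputable def Matrix.PosSemidef.sqrt {n : ℕ} {G : Matrix (Fin n) (Fin n) ℝ} (hG : G.PosSemidef) :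
    Matrix (Fin n) (Fin n) ℝ :=
  hG.1.eigenvectorUnitary.1 * diagonal ((RCLike.ofReal : ℝ → ℝ) ∘ (√·) ∘ hG.1.eigenvalues) *
    (star hG.1.eigenvectorUnitary : Matrix (Fin n) (Fin n) ℝ)

lemma bessel' {ι : Type*} [Fintype ι] {n : ℕ}
    {v : ι → EuclideanSpace ℝ (Fin n)} (hv : Orthonormal ℝ v) (x : Fin n → ℝ) :
    ∑ i, ((v i : Fin n → ℝ) ⬝ᵥ x) ^ 2 ≤ ∑ k, (x k) ^ 2 := by
  set y : EuclideanSpace ℝ (Fin n) := (WithLp.equiv 2 (Fin n → ℝ)).symm x with hy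
  have h := hv.sum_inner_products_le (x := y) (s := Finset.univ)
  have hnorm : ‖y‖ ^ 2 = ∑ k, (x k) ^ 2 := by
    rw [EuclideanSpace.norm_eq, Real.sq_sqrt (by positivity)]
    simp [hy, Real.norm_eq_abs, sq_abs, WithLp.equiv_symm_apply, WithLp.ofLp_toLp]
  rw [hnorm] at h
  refine le_trans (le_of_eq ?_) h
  refine Finset.sum_congr rfl fun i _ => ?_
  rw [Real.norm_eq_abs, sq_abs]
  simp [hy, PiLp.inner_apply, RCLike.inner_apply, dotProduct, WithLp.equiv_symm_apply, WithLp.ofLp_toLp,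
    mul_comm]

lemma trace_sqrt_eq {n : ℕ} {G : Matrix (Fin n) (Fin n) ℝ} (hG : G.PosSemidef) :
    hG.sqrt.trace = ∑ i, Real.sqrt (hG.1.eigenvalues i) := by
  rw [Matrix.PosSemidef.sqrt, Matrix.trace_mul_comm, ← Matrix.mul_assoc]
  have h1 : (star hG.1.eigenvectorUnitary : Matrix (Fin n) (Fin n) ℝ) *
      (hG.1.eigenvectorUnitary : Matrix (Fin n) (Fin n) ℝ) = 1 := by
    exact_mod_cast (Unitary.mem_iff.mp hG.1.eigenvectorUnitary.2).1
  rw [h1, Matrix.one_mul, Matrix.trace_diagonal]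
  simp

lemma dot_le_half {k : ℕ} (x y : Fin k → ℝ) :
    x ⬝ᵥ y ≤ (1/2) * (x ⬝ᵥ x + y ⬝ᵥ y) := by
  simp only [dotProduct, ← Finset.sum_add_distrib, Finset.mul_sum]
  refine Finset.sum_le_sum fun p _ => ?_
  nlinarith [sq_nonneg (x p - y p)]

private lemma nuclear_aux (M N P : ℕ)
    (C : Matrix (Fin M) (Fin P) ℝ) (B : Matrix (Fin N) (Fin P) ℝ)
    (A : Matrix (Fin M) (Fin N) ℝ) (hAdef : A = C * Bᵀ) :
    ((Matrix.posSemidef_conjTranspose_mul_self A).sqrt.trace : ℝ) ≤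
      (1 / 2) * ((∑ i, ∑ j, (B i j)^2) + (∑ i, ∑ j, (C i j)^2)) := by
  have hG := Matrix.posSemidef_conjTranspose_mul_self A
  set d : Fin N → ℝ := hG.1.eigenvalues with hd
  have hd0 : ∀ i, 0 ≤ d i := fun i => hG.eigenvalues_nonneg i
  set v : Fin N → EuclideanSpace ℝ (Fin N) := fun i => hG.1.eigenvectorBasis i with hv
  have hortho : Orthonormal ℝ v := hG.1.eigenvectorBasis.orthonormal
  have key : ∀ (x : Fin N → ℝ) (z : Fin M → ℝ), (A *ᵥ x) ⬝ᵥ z = x ⬝ᵥ (Aᵀ *ᵥ z) := by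
    intro x z
    rw [Matrix.dotProduct_mulVec, Matrix.vecMul_transpose]
  have hGv : ∀ i, Aᵀ *ᵥ (A *ᵥ (v i : Fin N → ℝ)) = d i • (v i : Fin N → ℝ) := by
    intro i
    rw [Matrix.mulVec_mulVec, ← Matrix.conjTranspose_eq_transpose_of_trivial]
    exact hG.1.mulVec_eigenvectorBasis i
  have hvv : ∀ i j, (v i : Fin N → ℝ) ⬝ᵥ (v j : Fin N → ℝ) = if i = j then 1 else 0 := by
    intro i j
    have h := orthonormal_iff_ite.mp hortho i j
    simpa [PiLp.inner_apply, RCLike.inner_apply, dotProduct, mul_comm] using h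
  have hAvv : ∀ i j, (A *ᵥ (v i : Fin N → ℝ)) ⬝ᵥ (A *ᵥ (v j : Fin N → ℝ))
      = d j * (if i = j then 1 else 0) := by
    intro i j
    rw [key, hGv j, dotProduct_smul, smul_eq_mul, hvv]
  set σ : Fin N → ℝ := fun i => Real.sqrt (d i) with hσ
  set u : Fin N → (Fin M → ℝ) :=
    fun i => if d i = 0 then 0 else (σ i)⁻¹ • (A *ᵥ (v i : Fin N → ℝ)) with hu
  have hσsq : ∀ i, σ i ^ 2 = d i := fun i => Real.sq_sqrt (hd0 i)
  have huAv : ∀ i, u i ⬝ᵥ (A *ᵥ (v i : Fin N → ℝ)) = σ i := by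
    intro i
    by_cases h : d i = 0
    · simp [hu, h, hσ]
    · have hσne : σ i ≠ 0 := fun hc => h (by rw [← hσsq i, hc]; ring)
      simp only [hu, if_neg h, smul_dotProduct, smul_eq_mul]
      rw [hAvv i i, if_pos rfl, mul_one, ← hσsq i]
      field_simp
  have huu : ∀ i j, d i ≠ 0 → d j ≠ 0 → u i ⬝ᵥ u j = if i = j then 1 else 0 := by
    intro i j hi hj
    have hσi : σ i ≠ 0 := fun hc => hi (by rw [← hσsq i, hc]; ring)
    have hσj : σ j ≠ 0 := fun hc => hj (by rw [← hσsq j, hc]; ring)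
    simp only [hu, if_neg hi, if_neg hj, smul_dotProduct, dotProduct_smul,
      smul_eq_mul]
    rw [hAvv i j]
    by_cases hij : i = j
    · subst hij
      rw [if_pos rfl, mul_one, ← hσsq i]
      field_simp
    · rw [if_neg hij]
      simp
  -- orthonormal subtype family for u
  have huo : Orthonormal ℝ (fun i : {i : Fin N // d i ≠ 0} =>
      ((WithLp.equiv 2 (Fin M → ℝ)).symm (u i) : EuclideanSpace ℝ (Fin M))) := by
    rw [orthonormal_iff_ite]
    intro i j
    have h := huu i j i.2 j.2
    have hiff : ((i : Fin N) = (j : Fin N)) ↔ i = j := Subtype.coe_inj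
    simp only [PiLp.inner_apply, RCLike.inner_apply, conj_trivial,
      WithLp.equiv_symm_apply, WithLp.ofLp_toLp]
    rw [show (∑ k, u (j : Fin N) k * u (i : Fin N) k) = u (i : Fin N) ⬝ᵥ u (j : Fin N) from
        by rw [dotProduct_comm]; rfl,
      h, if_congr hiff rfl rfl]
  have htr : hG.sqrt.trace = ∑ i, σ i := trace_sqrt_eq hG
  have hfac : ∀ i, σ i = (Cᵀ *ᵥ u i) ⬝ᵥ (Bᵀ *ᵥ (v i : Fin N → ℝ)) := by
    intro i
    rw [← huAv i]
    conv_rhs => rw [Matrix.mulVec_transpose, ← Matrix.dotProduct_mulVec,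
      Matrix.mulVec_mulVec, ← hAdef]
  have hB : ∑ i, (Bᵀ *ᵥ (v i : Fin N → ℝ)) ⬝ᵥ (Bᵀ *ᵥ (v i : Fin N → ℝ))
      ≤ ∑ i, ∑ j, (B i j) ^ 2 := by
    have h1 : ∀ i, (Bᵀ *ᵥ (v i : Fin N → ℝ)) ⬝ᵥ (Bᵀ *ᵥ (v i : Fin N → ℝ))
        = ∑ p, ((v i : Fin N → ℝ) ⬝ᵥ (fun n => B n p)) ^ 2 := by
      intro i
      simp only [dotProduct, Matrix.mulVec, Matrix.transpose_apply, sq]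
      refine Finset.sum_congr rfl fun p _ => ?_
      congr 1 <;> exact Finset.sum_congr rfl fun n _ => mul_comm _ _
    calc ∑ i, (Bᵀ *ᵥ (v i : Fin N → ℝ)) ⬝ᵥ (Bᵀ *ᵥ (v i : Fin N → ℝ))
        = ∑ p, ∑ i, ((v i : Fin N → ℝ) ⬝ᵥ (fun n => B n p)) ^ 2 := by
          rw [Finset.sum_comm]; exact Finset.sum_congr rfl fun i _ => h1 i
      _ ≤ ∑ p, ∑ n, (B n p) ^ 2 :=
          Finset.sum_le_sum fun p _ => bessel' hortho (fun n => B n p)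
      _ = ∑ i, ∑ j, (B i j) ^ 2 := Finset.sum_comm
  have hC : ∑ i, (Cᵀ *ᵥ u i) ⬝ᵥ (Cᵀ *ᵥ u i) ≤ ∑ i, ∑ j, (C i j) ^ 2 := by
    have hzero : ∀ i, d i = 0 → (Cᵀ *ᵥ u i) ⬝ᵥ (Cᵀ *ᵥ u i) = 0 := by
      intro i h
      simp [hu, h]
    have hstep : ∑ i, (Cᵀ *ᵥ u i) ⬝ᵥ (Cᵀ *ᵥ u i)
        = ∑ i : {i : Fin N // d i ≠ 0}, (Cᵀ *ᵥ u i) ⬝ᵥ (Cᵀ *ᵥ u i) := by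
      rw [← Finset.sum_filter_of_ne (p := fun i => d i ≠ 0)
        (fun x _ hx => by by_contra hc; exact hx (hzero x hc)),
        ← Finset.sum_subtype_eq_sum_filter]
      simp
    have h1 : ∀ i : Fin N, (Cᵀ *ᵥ u i) ⬝ᵥ (Cᵀ *ᵥ u i)
        = ∑ p, ((u i : Fin M → ℝ) ⬝ᵥ (fun m => C m p)) ^ 2 := by
      intro i
      simp only [dotProduct, Matrix.mulVec, Matrix.transpose_apply, sq]
      refine Finset.sum_congr rfl fun p _ => ?_
      congr 1 <;> exact Finset.sum_congr rfl fun n _ => mul_comm _ _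
    calc ∑ i, (Cᵀ *ᵥ u i) ⬝ᵥ (Cᵀ *ᵥ u i)
        = ∑ p, ∑ i : {i : Fin N // d i ≠ 0}, ((u i : Fin M → ℝ) ⬝ᵥ (fun m => C m p)) ^ 2 := by
          rw [hstep, Finset.sum_comm]
          exact Finset.sum_congr rfl fun i _ => h1 i
      _ ≤ ∑ p, ∑ m, (C m p) ^ 2 :=
          Finset.sum_le_sum fun p _ => bessel' huo (fun m => C m p)
      _ = ∑ i, ∑ j, (C i j) ^ 2 := Finset.sum_comm
  calc hG.sqrt.trace = ∑ i, σ i := htr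
    _ ≤ ∑ i, (1/2) * ((Cᵀ *ᵥ u i) ⬝ᵥ (Cᵀ *ᵥ u i)
          + (Bᵀ *ᵥ (v i : Fin N → ℝ)) ⬝ᵥ (Bᵀ *ᵥ (v i : Fin N → ℝ))) := by
        refine Finset.sum_le_sum fun i _ => ?_
        rw [hfac i]
        exact dot_le_half _ _
    _ = (1/2) * ((∑ i, (Cᵀ *ᵥ u i) ⬝ᵥ (Cᵀ *ᵥ u i))
          + ∑ i, (Bᵀ *ᵥ (v i : Fin N → ℝ)) ⬝ᵥ (Bᵀ *ᵥ (v i : Fin N → ℝ))) := by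
        rw [← Finset.mul_sum, Finset.sum_add_distrib]
    _ ≤ (1/2) * ((∑ i, ∑ j, (C i j) ^ 2) + ∑ i, ∑ j, (B i j) ^ 2) := by
        have := add_le_add hC hB
        linarith
    _ = (1 / 2) * ((∑ i, ∑ j, (B i j)^2) + (∑ i, ∑ j, (C i j)^2)) := by ring

/-- Factorization lower bound for the nuclear norm:
`‖C Bᵀ‖_* ≤ (1/2)(‖B‖_F² + ‖C‖_F²)`. -/
theorem nuclearNorm_le_half_frobSq (M N P : ℕ)
    (C : Matrix (Fin M) (Fin P) ℝ) (B : Matrix (Fin N) (Fin P) ℝ) :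
    nuclearNorm (C * Bᵀ) ≤ (1 / 2) * (frobSq B + frobSq C) := by
  simpa [nuclearNorm, frobSq, Matrix.PosSemidef.sqrt] using nuclear_aux M N P C B (C * Bᵀ) rfl
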